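/- Let E ⊂ ℝ^n be nonempty and compact, θ ∈ (0,1], 0 < r < 1 and 0 ≤ t ≤ s ≤ m ≤ n. Then φ_{r,θ}^{s,m}(x) ≤ φ_{r,θ}^{t,m}(x) ≤ r^{(t−s)(1−θ)} φ_{r,θ}^{s,m}(x) for all x ∈ ℝ^n, and consequently C_{r,θ}^{s,m}(E) ≥ C_{r,θ}^{t,m}(E) ≥ r^{(s−t)(1−θ)} C_{r,θ}^{s,m}(E). -/
import Mathlib


open MeasureTheory Metric Set Filter Topology
open scoped ENNReal NNReal

noncomputable section

/-- Euclidean space `ℝ^n`. -/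
abbrev Euc (n : ℕ) := EuclideanSpace ℝ (Fin n)

instance matrixMeasurableSpace (n : ℕ) : MeasurableSpace (Matrix (Fin n) (Fin n) ℝ) :=
  inferInstanceAs (MeasurableSpace (Fin n → Fin n → ℝ))

/-- The restricted covering sum `S_{r,θ}^s(E)`: the infimum of `Σ_i |U_i|^s` over all
countable covers `{U_i}` of `E` with `r ≤ |U_i| ≤ r^θ`, valued in `ℝ≥0∞`. -/
def coverSum (n : ℕ) (E : Set (Euc n)) (θ s r : ℝ) : ℝ≥0∞ :=
  sInf { T : ℝ≥0∞ | ∃ 𝒰 : Set (Set (Euc n)), 𝒰.Countable ∧ E ⊆ ⋃₀ 𝒰 ∧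
    (∀ U ∈ 𝒰, r ≤ diam U ∧ diam U ≤ r ^ θ) ∧
    T = ∑' U : 𝒰, ENNReal.ofReal (diam (U : Set (Euc n)) ^ s) }

/-- Real-valued version of `coverSum`. -/
def Sval (n : ℕ) (E : Set (Euc n)) (θ s r : ℝ) : ℝ := (coverSum n E θ s r).toReal

/-- The quotient `log S_{r,θ}^s(E) / (-log r)`. -/
def Squot (n : ℕ) (E : Set (Euc n)) (θ s r : ℝ) : ℝ :=
  Real.log (Sval n E θ s r) / (-Real.log r)

/-- `N_δ(E)`: the smallest number of sets of diameter at most `δ` needed to cover `E`. -/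
def covNum (n : ℕ) (E : Set (Euc n)) (δ : ℝ) : ℕ :=
  sInf { k : ℕ | ∃ U : Fin k → Set (Euc n), E ⊆ ⋃ i, U i ∧ ∀ i, diam (U i) ≤ δ }

/-- The lower box-counting dimension of `E`. -/
def lowerBoxDim (n : ℕ) (E : Set (Euc n)) : ℝ :=
  liminf (fun δ : ℝ => Real.log (covNum n E δ) / (-Real.log δ)) (𝓝[>] 0)

/-- The upper box-counting dimension of `E`. -/
def upperBoxDim (n : ℕ) (E : Set (Euc n)) : ℝ :=
  limsup (fun δ : ℝ => Real.log (covNum n E δ) / (-Real.log δ)) (𝓝[>] 0)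

/-- The kernel `φ_{r,θ}^{s,m}`. -/
def phiK (n : ℕ) (m s θ r : ℝ) (x : Euc n) : ℝ :=
  if ‖x‖ < r then 1
  else if ‖x‖ < r ^ θ then (r / ‖x‖) ^ s
  else r ^ (θ * (m - s) + s) / ‖x‖ ^ m

/-- The kernel `φ̃_{r,θ}^s`. -/
def phiT (n : ℕ) (s θ r : ℝ) (x : Euc n) : ℝ :=
  if ‖x‖ < r then 1
  else if ‖x‖ ≤ r ^ θ then (r / ‖x‖) ^ s
  else 0

/-- The kernel `φ_r^m(x) = min{1, (r/|x|)^m}`. -/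
def phiB (n : ℕ) (m r : ℝ) (x : Euc n) : ℝ :=
  if ‖x‖ ≤ r then 1 else (r / ‖x‖) ^ m

/-- The energy `∬ φ(x-y) dμ(x)dμ(y)` of a measure with respect to a kernel `φ`. -/
def energy (n : ℕ) (φ : Euc n → ℝ) (μ : Measure (Euc n)) : ℝ :=
  ∫ x, ∫ y, φ (x - y) ∂μ ∂μ

/-- The potential `∫ φ(x-y) dμ(y)` of a measure at `x` with respect to a kernel `φ`. -/
def potential (n : ℕ) (φ : Euc n → ℝ) (μ : Measure (Euc n)) (x : Euc n) : ℝ :=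
  ∫ y, φ (x - y) ∂μ

/-- `μ` is a Borel probability measure supported on `E`. -/
def PMeasOn (n : ℕ) (E : Set (Euc n)) (μ : Measure (Euc n)) : Prop :=
  IsProbabilityMeasure μ ∧ μ Eᶜ = 0

/-- The capacity `C_{r,θ}^{s,m}(E)`: the reciprocal of the infimal energy of Borel
probability measures supported on `E` with respect to the kernel `φ_{r,θ}^{s,m}`. -/
def capacity (n : ℕ) (m s θ r : ℝ) (E : Set (Euc n)) : ℝ :=
  (sInf { e : ℝ | ∃ μ : Measure (Euc n), PMeasOn n E μ ∧ e = energy n (phiK n m s θ r) μ })⁻¹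

/-- The quotient `log C_{r,θ}^{s,m}(E) / (-log r)`. -/
def Cquot (n : ℕ) (m s θ : ℝ) (E : Set (Euc n)) (r : ℝ) : ℝ :=
  Real.log (capacity n m s θ r E) / (-Real.log r)

/-- `d` is the lower intermediate dimension `\underline{dim}_θ E`, i.e. the unique
`s ∈ [0,n]` such that `liminf_{r→0} log S_{r,θ}^s(E) / (-log r) = 0`. -/
def IsLowerInterDim (n : ℕ) (θ : ℝ) (E : Set (Euc n)) (d : ℝ) : Prop :=
  d ∈ Icc (0:ℝ) n ∧ liminf (fun r => Squot n E θ d r) (𝓝[>] 0) = 0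

/-- `d` is the upper intermediate dimension `\overline{dim}_θ E`. -/
def IsUpperInterDim (n : ℕ) (θ : ℝ) (E : Set (Euc n)) (d : ℝ) : Prop :=
  d ∈ Icc (0:ℝ) n ∧ limsup (fun r => Squot n E θ d r) (𝓝[>] 0) = 0

/-- `d` is the lower intermediate dimension profile `\underline{dim}_θ^m E`, i.e. the unique
`s ∈ [0,m]` such that `liminf_{r→0} log C_{r,θ}^{s,m}(E) / (-log r) = s`; for bounded sets the
capacity is that of the closure. -/
def IsLowerDimProfile (n m : ℕ) (θ : ℝ) (E : Set (Euc n)) (d : ℝ) : Prop :=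
  d ∈ Icc (0:ℝ) m ∧ liminf (fun r => Cquot n m d θ (closure E) r) (𝓝[>] 0) = d

/-- `d` is the upper intermediate dimension profile `\overline{dim}_θ^m E`. -/
def IsUpperDimProfile (n m : ℕ) (θ : ℝ) (E : Set (Euc n)) (d : ℝ) : Prop :=
  d ∈ Icc (0:ℝ) m ∧ limsup (fun r => Cquot n m d θ (closure E) r) (𝓝[>] 0) = d

/-- `P` is the matrix of an orthogonal projection of `ℝ^n` onto an `m`-dimensional subspace;
such matrices parametrise the Grassmannian `G(n,m)`. -/
def IsProjMat (n m : ℕ) (P : Matrix (Fin n) (Fin n) ℝ) : Prop :=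
  P.transpose = P ∧ P * P = P ∧ P.rank = m

/-- The orthogonal projection map `π_V` associated to a projection matrix. -/
def projMap (n : ℕ) (P : Matrix (Fin n) (Fin n) ℝ) : Euc n → Euc n :=
  fun x => Matrix.toEuclideanLin P x

/-- `γ` is the natural invariant measure `γ_{n,m}` on the Grassmannian `G(n,m)` (realised as
the space of orthogonal projection matrices of rank `m`): a probability measure supported on
the rank-`m` orthogonal projections and invariant under the action of the orthogonal group. -/
def IsGrassMeasure (n m : ℕ) (γ : Measure (Matrix (Fin n) (Fin n) ℝ)) : Prop :=
  IsProbabilityMeasure γ ∧ γ {P | IsProjMat n m P}ᶜ = 0 ∧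
  ∀ A ∈ Matrix.orthogonalGroup (Fin n) ℝ,
    Measure.map (fun P => A * P * A.transpose) γ = γ
section aux
variable {n : ℕ} {m s t θ r : ℝ}

lemma phiK_nonneg (hr0 : 0 < r) (x : Euc n) : 0 ≤ phiK n m s θ r x := by
  unfold phiK
  split_ifs with h1 h2
  · norm_num
  · exact Real.rpow_nonneg (div_nonneg hr0.le (norm_nonneg x)) s
  · exact div_nonneg (Real.rpow_nonneg hr0.le _) (Real.rpow_nonneg (norm_nonneg x) m)

lemma phiK_le_one (hθ1 : θ ≤ 1) (hr0 : 0 < r) (hr1 : r < 1)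
    (hs0 : 0 ≤ s) (hsm : s ≤ m) (x : Euc n) : phiK n m s θ r x ≤ 1 := by
  unfold phiK
  split_ifs with h1 h2
  · exact le_refl _
  · exact Real.rpow_le_one (div_nonneg hr0.le (norm_nonneg x))
      ((div_le_one (lt_of_lt_of_le hr0 (not_lt.1 h1))).2 (not_lt.1 h1)) hs0
  · push_neg at h1 h2
    have hx0 : 0 < ‖x‖ := lt_of_lt_of_le (Real.rpow_pos_of_pos hr0 θ) h2
    rw [div_le_one (Real.rpow_pos_of_pos hx0 m)]
    calc r ^ (θ * (m - s) + s) ≤ r ^ (θ * m) := by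
          apply Real.rpow_le_rpow_of_exponent_ge hr0 hr1.le
          nlinarith [mul_nonneg hs0 (sub_nonneg.2 hθ1)]
      _ = (r ^ θ) ^ m := Real.rpow_mul hr0.le θ m
      _ ≤ ‖x‖ ^ m := Real.rpow_le_rpow (Real.rpow_nonneg hr0.le θ) h2 (hs0.trans hsm)

lemma phiK_anti (hθ1 : θ ≤ 1) (hr0 : 0 < r) (hr1 : r < 1)
    (hts : t ≤ s) (x : Euc n) :
    phiK n m s θ r x ≤ phiK n m t θ r x := by
  unfold phiK
  split_ifs with h1 h2
  · exact le_refl _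
  · have hx0 : 0 < ‖x‖ := lt_of_lt_of_le hr0 (not_lt.1 h1)
    exact Real.rpow_le_rpow_of_exponent_ge (div_pos hr0 hx0)
      ((div_le_one hx0).2 (not_lt.1 h1)) hts
  · have hx0 : 0 < ‖x‖ := lt_of_lt_of_le (Real.rpow_pos_of_pos hr0 θ) (not_lt.1 h2)
    have hnum : r ^ (θ * (m - s) + s) ≤ r ^ (θ * (m - t) + t) :=
      Real.rpow_le_rpow_of_exponent_ge hr0 hr1.le
        (by nlinarith [mul_nonneg (sub_nonneg.2 hts) (sub_nonneg.2 hθ1)])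
    have hden : (0:ℝ) < ‖x‖ ^ m := Real.rpow_pos_of_pos hx0 m
    exact (div_le_div_iff_of_pos_right hden).2 hnum

lemma phiK_le_mul (hθ1 : θ ≤ 1) (hr0 : 0 < r) (hr1 : r < 1)
    (hts : t ≤ s) (x : Euc n) :
    phiK n m t θ r x ≤ r ^ ((t - s) * (1 - θ)) * phiK n m s θ r x := by
  have hc1 : (1:ℝ) ≤ r ^ ((t - s) * (1 - θ)) :=
    Real.one_le_rpow_of_pos_of_le_one_of_nonpos hr0 hr1.le
      (mul_nonpos_of_nonpos_of_nonneg (by linarith) (by linarith))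
  unfold phiK
  split_ifs with h1 h2
  · simpa using hc1
  · push_neg at h1
    have hx0 : 0 < ‖x‖ := lt_of_lt_of_le hr0 h1
    have hd : 0 < ‖x‖ / r := div_pos hx0 hr0
    have key : (‖x‖ / r) ^ (s - t) ≤ r ^ ((t - s) * (1 - θ)) := by
      have h2' : ‖x‖ / r ≤ r ^ (θ - 1) := by
        rw [Real.rpow_sub hr0, Real.rpow_one]
        exact (div_le_div_iff_of_pos_right hr0).2 h2.le
      calc (‖x‖ / r) ^ (s - t) ≤ (r ^ (θ - 1)) ^ (s - t) :=
            Real.rpow_le_rpow (div_nonneg (norm_nonneg x) hr0.le) h2' (by linarith)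
        _ = r ^ ((t - s) * (1 - θ)) := by
            rw [← Real.rpow_mul hr0.le]
            congr 1; ring
    have heq : (r / ‖x‖) ^ t = (‖x‖ / r) ^ (s - t) * (r / ‖x‖) ^ s := by
      have : r / ‖x‖ = (‖x‖ / r)⁻¹ := (inv_div _ _).symm
      rw [this, Real.inv_rpow hd.le, Real.inv_rpow hd.le, ← Real.rpow_neg hd.le,
        ← Real.rpow_neg hd.le, ← Real.rpow_add hd]
      congr 1; ring
    rw [heq]
    exact mul_le_mul_of_nonneg_right key
      (Real.rpow_nonneg (div_nonneg hr0.le (norm_nonneg x)) s)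
  · apply le_of_eq
    rw [← mul_div_assoc, ← Real.rpow_add hr0]
    have : (t - s) * (1 - θ) + (θ * (m - s) + s) = θ * (m - t) + t := by ring
    rw [this]

end aux

section meas
variable {n : ℕ} {m s t θ r : ℝ}

lemma phiK_measurable : Measurable (phiK n m s θ r) := by
  unfold phiK
  apply Measurable.ite (measurableSet_lt measurable_norm measurable_const) measurable_const
  apply Measurable.ite (measurableSet_lt measurable_norm measurable_const)
  · fun_prop
  · fun_prop

lemma energy_nonneg {φ : Euc n → ℝ} (h0 : ∀ x, 0 ≤ φ x) (μ : Measure (Euc n)) :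
    0 ≤ energy n φ μ :=
  integral_nonneg fun _ => integral_nonneg fun _ => h0 _

lemma energy_mono {φ ψ : Euc n → ℝ} {C : ℝ} (hψ : Measurable ψ)
    (h0 : ∀ x, 0 ≤ φ x) (hle : ∀ x, φ x ≤ ψ x) (hC : ∀ x, ψ x ≤ C)
    (μ : Measure (Euc n)) [IsProbabilityMeasure μ] :
    energy n φ μ ≤ energy n ψ μ := by
  have hψ0 : ∀ x, 0 ≤ ψ x := fun x => (h0 x).trans (hle x)
  have hint : ∀ x, Integrable (fun y => ψ (x - y)) μ := fun x =>
    (integrable_const C).mono'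
      ((hψ.comp (measurable_const.sub measurable_id)).aestronglyMeasurable)
      (ae_of_all _ fun y => by rw [Real.norm_of_nonneg (hψ0 _)]; exact hC _)
  have hinner : ∀ x, ∫ y, φ (x - y) ∂μ ≤ ∫ y, ψ (x - y) ∂μ := fun x =>
    integral_mono_of_nonneg (ae_of_all _ fun y => h0 _) (hint x) (ae_of_all _ fun y => hle _)
  have hpb : ∀ x, ∫ y, ψ (x - y) ∂μ ≤ C := fun x => by
    calc ∫ y, ψ (x - y) ∂μ ≤ ∫ _, C ∂μ := integral_mono (hint x) (integrable_const C)
          (fun y => hC _)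
      _ = C := by simp
  have hSM : StronglyMeasurable (fun p : Euc n × Euc n => ψ (p.1 - p.2)) :=
    (hψ.comp (measurable_fst.sub measurable_snd)).stronglyMeasurable
  have hPmeas : StronglyMeasurable (fun x => ∫ y, ψ (x - y) ∂μ) :=
    hSM.integral_prod_right'
  have hPint : Integrable (fun x => ∫ y, ψ (x - y) ∂μ) μ :=
    (integrable_const C).mono' hPmeas.aestronglyMeasurable
      (ae_of_all _ fun x => by
        rw [Real.norm_of_nonneg (integral_nonneg fun y => hψ0 _)]; exact hpb x)
  exact integral_mono_of_nonneg
    (ae_of_all _ fun x => integral_nonneg fun y => h0 _) hPint (ae_of_all _ hinner)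

lemma energy_smul {φ : Euc n → ℝ} (c : ℝ) (μ : Measure (Euc n)) :
    energy n (fun x => c * φ x) μ = c * energy n φ μ := by
  unfold energy
  simp only [integral_const_mul]

end meas

/-- Comparison of the kernels `φ_{r,θ}^{s,m}` and `φ_{r,θ}^{t,m}` for
`t ≤ s`, and the resulting comparison of capacities. -/
theorem statement5 (n m : ℕ) (hm1 : 1 ≤ m) (hmn : m ≤ n)
    (E : Set (Euc n)) (hE : IsCompact E) (hEne : E.Nonempty)
    (θ : ℝ) (hθ : θ ∈ Ioc (0:ℝ) 1) (r : ℝ) (hr : r ∈ Ioo (0:ℝ) 1)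
    (s t : ℝ) (ht0 : 0 ≤ t) (hts : t ≤ s) (hsm : s ≤ m) :
    (∀ x : Euc n, phiK n m s θ r x ≤ phiK n m t θ r x ∧
      phiK n m t θ r x ≤ r ^ ((t - s) * (1 - θ)) * phiK n m s θ r x) ∧
    capacity n m t θ r E ≤ capacity n m s θ r E ∧
    r ^ ((s - t) * (1 - θ)) * capacity n m s θ r E ≤ capacity n m t θ r E := by
  
  obtain ⟨hr0, hr1⟩ := hr
  obtain ⟨hθ0, hθ1⟩ := hθ
  set c : ℝ := r ^ ((t - s) * (1 - θ)) with hc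
  have hc0 : 0 < c := Real.rpow_pos_of_pos hr0 _
  have hs0 : 0 ≤ s := ht0.trans hts
  have htm : t ≤ m := hts.trans hsm
  refine ⟨fun x => ⟨phiK_anti hθ1 hr0 hr1 hts x, phiK_le_mul hθ1 hr0 hr1 hts x⟩, ?_⟩
  -- capacity part
  set Ss := { e : ℝ | ∃ μ : Measure (Euc n), PMeasOn n E μ ∧ e = energy n (phiK n m s θ r) μ }
  set St := { e : ℝ | ∃ μ : Measure (Euc n), PMeasOn n E μ ∧ e = energy n (phiK n m t θ r) μ }
  obtain ⟨p, hp⟩ := hEne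
  have hPdirac : PMeasOn n E (Measure.dirac p) := by
    refine ⟨inferInstance, ?_⟩
    rw [Measure.dirac_apply' _ hE.isClosed.measurableSet.compl]
    simp [hp]
  have hSsne : Ss.Nonempty := ⟨_, Measure.dirac p, hPdirac, rfl⟩
  have hStne : St.Nonempty := ⟨_, Measure.dirac p, hPdirac, rfl⟩
  have hSsbdd : BddBelow Ss := ⟨0, by rintro e ⟨μ, hμ, rfl⟩; exact energy_nonneg (phiK_nonneg hr0) μ⟩
  have hStbdd : BddBelow St := ⟨0, by rintro e ⟨μ, hμ, rfl⟩; exact energy_nonneg (phiK_nonneg hr0) μ⟩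
  have hIs0 : 0 ≤ sInf Ss := le_csInf hSsne (by rintro e ⟨μ, hμ, rfl⟩; exact energy_nonneg (phiK_nonneg hr0) μ)
  have hIt0 : 0 ≤ sInf St := le_csInf hStne (by rintro e ⟨μ, hμ, rfl⟩; exact energy_nonneg (phiK_nonneg hr0) μ)
  have h1 : sInf Ss ≤ sInf St := by
    apply le_csInf hStne
    rintro e ⟨μ, hμ, rfl⟩
    haveI := hμ.1
    refine (csInf_le hSsbdd ⟨μ, hμ, rfl⟩).trans ?_
    exact energy_mono phiK_measurable (phiK_nonneg hr0) (fun x => phiK_anti hθ1 hr0 hr1 hts x)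
      (fun x => phiK_le_one hθ1 hr0 hr1 ht0 htm x) μ
  have h2 : sInf St ≤ c * sInf Ss := by
    rw [← inv_mul_le_iff₀ hc0]
    apply le_csInf hSsne
    rintro e ⟨μ, hμ, rfl⟩
    haveI := hμ.1
    rw [inv_mul_le_iff₀ hc0]
    refine (csInf_le hStbdd ⟨μ, hμ, rfl⟩).trans ?_
    have := energy_mono (φ := phiK n m t θ r) (ψ := fun x => c * phiK n m s θ r x) (C := c)
      (measurable_const.mul phiK_measurable) (phiK_nonneg hr0)
      (fun x => phiK_le_mul hθ1 hr0 hr1 hts x)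
      (fun x => by
        calc c * phiK n m s θ r x ≤ c * 1 :=
              mul_le_mul_of_nonneg_left (phiK_le_one hθ1 hr0 hr1 hs0 hsm x) hc0.le
          _ = c := mul_one c) μ
    rwa [energy_smul] at this
  unfold capacity
  rcases eq_or_lt_of_le hIs0 with heq | hIs
  · have hIt : sInf St = 0 := le_antisymm (by simpa [← heq] using h2) hIt0
    rw [← heq, hIt]
    simp
  · have hIt : 0 < sInf St := hIs.trans_le h1
    constructor
    · exact inv_anti₀ hIs h1
    · have hrw : r ^ ((s - t) * (1 - θ)) = c⁻¹ := by
        rw [hc, ← Real.rpow_neg hr0.le]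
        congr 1; ring
      rw [hrw, ← mul_inv]
      exact inv_anti₀ hIt h2
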